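/- For all c>0 and μ∈ℝ\{0}, ∂_c E_μ[Q_{c,μ}] = −c^{3/2}/(c+2μ²), which is strictly negative. -/

import Mathlib

open Real

/-- Energy of the Gardner soliton as a function of the scaling `c`. -/
noncomputable def gardnerSolitonEnergy (μ c : ℝ) : ℝ :=
  -(2 / 3) * c ^ ((3 : ℝ) / 2) + 4 * μ ^ 2 * Real.sqrt c
    - 4 * Real.sqrt 2 * μ ^ 3 * Real.arctan (Real.sqrt c / (Real.sqrt 2 * μ))

theorem gardner_soliton_weinstein_energy (c μ : ℝ) (hc : 0 < c) (hμ : μ ≠ 0) :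
    HasDerivAt (gardnerSolitonEnergy μ) (-(c ^ ((3 : ℝ) / 2)) / (c + 2 * μ ^ 2)) c ∧
    -(c ^ ((3 : ℝ) / 2)) / (c + 2 * μ ^ 2) < 0 := by
  have hsc : 0 < Real.sqrt c := Real.sqrt_pos.mpr hc
  have hsc2 : Real.sqrt c ^ 2 = c := Real.sq_sqrt hc.le
  have hs2 : (0:ℝ) < Real.sqrt 2 := by positivity
  have hs22 : Real.sqrt 2 ^ 2 = 2 := Real.sq_sqrt (by norm_num)
  have hden : 0 < c + 2 * μ ^ 2 := by positivity
  have hr32 : c ^ ((3:ℝ)/2) = c * Real.sqrt c := by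
    rw [show (3:ℝ)/2 = 1 + 1/2 by norm_num, Real.rpow_add hc, Real.rpow_one,
      ← Real.sqrt_eq_rpow]
  have h1 : HasDerivAt (fun x : ℝ => x ^ ((3:ℝ)/2)) ((3/2) * c ^ ((3:ℝ)/2 - 1)) c :=
    Real.hasDerivAt_rpow_const (Or.inl hc.ne')
  have h1' : HasDerivAt (fun x : ℝ => x ^ ((3:ℝ)/2)) ((3/2) * Real.sqrt c) c := by
    convert h1 using 1
    rw [show (3:ℝ)/2 - 1 = 1/2 by norm_num, ← Real.sqrt_eq_rpow]
  have h2 : HasDerivAt Real.sqrt (1 / (2 * Real.sqrt c)) c := Real.hasDerivAt_sqrt hc.ne'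
  have h3 : HasDerivAt (fun x : ℝ => Real.arctan (Real.sqrt x / (Real.sqrt 2 * μ)))
      ((1 / (1 + (Real.sqrt c / (Real.sqrt 2 * μ)) ^ 2)) * (1 / (2 * Real.sqrt c) / (Real.sqrt 2 * μ))) c := by
    exact (Real.hasDerivAt_arctan _).comp c (h2.div_const _)
  have H := (((h1'.const_mul (-(2/3))).add (h2.const_mul (4 * μ ^ 2))).sub
      (h3.const_mul (4 * Real.sqrt 2 * μ ^ 3)))
  constructor
  · convert H using 1
    · rfl
    · rfl
    · rfl
    have h1den : 1 + (Real.sqrt c / (Real.sqrt 2 * μ)) ^ 2 ≠ 0 := by positivity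
    have hq : (Real.sqrt c / (Real.sqrt 2 * μ)) ^ 2 = c / (2 * μ ^ 2) := by
      rw [div_pow, mul_pow, hsc2, hs22]
    rw [hr32, hq]
    rw [← hsc2]
    field_simp
    ring_nf
    linear_combination (4 * Real.sqrt c ^ 2 * μ ^ 2 + 8 * μ ^ 4) * Real.sq_sqrt (sq_nonneg (Real.sqrt c))
  · apply div_neg_of_neg_of_pos _ hden
    rw [hr32]
    nlinarith [mul_pos hc hsc]
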